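/- Let f : ℝ≥0 × ℝ≥0 → ℝ be continuous, bounded above by a constant C₁ on the trajectory, with f(k,K) ≤ 0 whenever k ≥ k̄ for some k̄ > 0. Suppose k : [0,∞) → ℝ is absolutely continuous with k(t) ≥ 0, k(0) = k₀, and c : [0,∞) → ℝ measurable with c(t) ≥ 0, such that k'(t) + c(t) ≤ f(k(t), K(t)) ≤ C₁ for a.e. t. Then k(t) ≤ max{k₀, k̄} for all t ≥ 0. -/

import Mathlib

open MeasureTheory Set

theorem stmt_0
    (f : ℝ → ℝ → ℝ) (K k k' c : ℝ → ℝ) (C₁ kbar k₀ : ℝ)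
    (hf : Continuous fun p : ℝ × ℝ => f p.1 p.2)
    (hkbar : 0 < kbar)
    (hfneg : ∀ t, 0 ≤ t → ∀ x, kbar ≤ x → f x (K t) ≤ 0)
    (hint : ∀ t, 0 ≤ t → IntervalIntegrable k' volume 0 t)
    (hAC : ∀ t, 0 ≤ t → k t = k₀ + ∫ s in (0:ℝ)..t, k' s)
    (hknn : ∀ t, 0 ≤ t → 0 ≤ k t)
    (hcnn : ∀ t, 0 ≤ t → 0 ≤ c t)
    (hconstr : ∀ᵐ t ∂(volume.restrict (Ici (0:ℝ))),
      k' t + c t ≤ f (k t) (K t) ∧ f (k t) (K t) ≤ C₁) :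
    ∀ t, 0 ≤ t → k t ≤ max k₀ kbar := by
  intro T hT
  by_contra hTk
  push_neg at hTk
  set M := max k₀ kbar with hM
  have hk0 : k 0 = k₀ := by simpa using hAC 0 le_rfl
  -- continuity of k on [0,T]
  have hcont : ContinuousOn k (Icc 0 T) := by
    have h1 : ContinuousOn (fun x => k₀ + ∫ s in (0:ℝ)..x, k' s) (Icc 0 T) := by
      refine continuousOn_const.add ?_
      have := intervalIntegral.continuousOn_primitive_interval' (f := k') (μ := volume)
        (b₁ := 0) (b₂ := T) (a := 0) (hint T hT) left_mem_uIcc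
      simpa [Set.uIcc_of_le hT] using this
    exact h1.congr fun t ht => hAC t ht.1
  -- the set of times where k ≤ M
  set S : Set ℝ := {t ∈ Icc 0 T | k t ≤ M} with hS
  have hSne : S.Nonempty := ⟨0, ⟨le_rfl, hT⟩, by rw [hk0]; exact le_max_left _ _⟩
  have hSbdd : BddAbove S := ⟨T, fun x hx => hx.1.2⟩
  have hSclosed : IsClosed S := by
    have : S = Icc 0 T ∩ k ⁻¹' Iic M := by
      ext x; simp [hS]
    rw [this]
    exact hcont.preimage_isClosed_of_isClosed isClosed_Icc isClosed_Iic
  set s := sSup S with hs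
  have hsmem : s ∈ S := hSclosed.csSup_mem hSne hSbdd
  have hs0 : (0:ℝ) ≤ s := hsmem.1.1
  have hsT : s ≤ T := hsmem.1.2
  -- on (s, T], k > M ≥ kbar
  have hgt : ∀ t ∈ Ioc s T, kbar ≤ k t := by
    intro t ht
    by_contra h
    push_neg at h
    have htmem : t ∈ S := ⟨⟨hs0.trans ht.1.le, ht.2⟩, le_trans h.le (le_max_right _ _)⟩
    exact absurd (le_csSup hSbdd htmem) (not_le.mpr ht.1)
  -- a.e. on (s,T], k' ≤ 0
  have hae : ∀ᵐ t ∂(volume.restrict (Ioc s T)), k' t ≤ 0 := by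
    have hsub : Ioc s T ⊆ Ici (0:ℝ) := fun x hx => hs0.trans hx.1.le
    have h1 : ∀ᵐ t ∂(volume.restrict (Ioc s T)),
        k' t + c t ≤ f (k t) (K t) ∧ f (k t) (K t) ≤ C₁ :=
      ae_restrict_of_ae_restrict_of_subset hsub hconstr
    have h2 : ∀ᵐ t ∂(volume.restrict (Ioc s T)), t ∈ Ioc s T :=
      ae_restrict_mem measurableSet_Ioc
    filter_upwards [h1, h2] with t ht htmem
    have h0t : (0:ℝ) ≤ t := hs0.trans htmem.1.le
    have hfle : f (k t) (K t) ≤ 0 := hfneg t h0t _ (hgt t htmem)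
    have := ht.1
    nlinarith [hcnn t h0t]
  -- integral of k' over (s,T] is ≤ 0
  have hintsT : IntervalIntegrable k' volume s T :=
    (hint T hT).mono_set (by rw [Set.uIcc_of_le hsT, Set.uIcc_of_le hT]; exact Icc_subset_Icc hs0 le_rfl)
  have hI : (∫ u in s..T, k' u) ≤ 0 := by
    rw [intervalIntegral.integral_of_le hsT]
    exact integral_nonpos_of_ae hae
  -- conclude
  have hsplit : k T = k s + ∫ u in s..T, k' u := by
    have h1 := hAC T hT
    have h2 := hAC s hs0
    have hadd : (∫ u in (0:ℝ)..s, k' u) + (∫ u in s..T, k' u) = ∫ u in (0:ℝ)..T, k' u :=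
      intervalIntegral.integral_add_adjacent_intervals (hint s hs0) hintsT
    rw [h1, h2, ← hadd]; ring
  have : k T ≤ M := by
    rw [hsplit]
    have := hsmem.2
    linarith
  exact absurd this (not_le.mpr hTk)
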